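/- For every n ∈ ℕ with n ≥ 1 and every h ∈ ℂ with Re(h) > 1, the series below converge absolutely and the generalized (h,q)-Bernoulli number attached to χ satisfies β_{n,χ,q}^h = (h−1)(1−q) · Σ_{m=0}^{∞} q^{(h−1)m}·χ(m)·[m]_q^{n} − n · Σ_{m=0}^{∞} q^{hm}·χ(m)·[m]_q^{n−1}, where in the m = 0 term the convention [0]_q^{0} = 1 is used. -/

import Mathlib

open Complex Finset Filter

/-- Complex power `q^z := exp(z·log q)` for a real base `q`. -/
noncomputable def qcpow (q : ℝ) (z : ℂ) : ℂ := Complex.exp (z * (Real.log q : ℂ))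

/-- The complex `q`-number `[z]_q = (1 - q^z)/(1 - q)`. -/
noncomputable def qnum (q : ℝ) (z : ℂ) : ℂ := (1 - qcpow q z) / (1 - (q : ℂ))

/-- The real `q`-number `[y]_q = (1 - q^y)/(1 - q)` for real `y`. -/
noncomputable def qnumR (q : ℝ) (y : ℝ) : ℝ := (1 - Real.exp (y * Real.log q)) / (1 - q)

/-- The `(h,q)`-Bernoulli polynomial
`β_{n,q}^h(x) = (1-q)^{-n} ∑_{l=0}^{n} C(n,l) (-1)^l q^{lx} (l+h-1)/[l+h-1]_q`. -/
noncomputable def qbeta (q : ℝ) (h : ℂ) (n : ℕ) (x : ℝ) : ℂ :=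
  (1 - (q : ℂ))⁻¹ ^ n * ∑ l ∈ Finset.range (n + 1),
    (n.choose l : ℂ) * (-1) ^ l * qcpow q ((l : ℂ) * (x : ℂ)) *
      (((l : ℂ) + h - 1) / qnum q ((l : ℂ) + h - 1))

/-- The generalized `(h,q)`-Bernoulli polynomial attached to a Dirichlet character `χ` mod `f`:
`β_{n,χ,q}^h(x) = [f]_q^{n-1} ∑_{a=0}^{f-1} χ(a) q^{(h-1)a} β_{n,q^f}^h((x+a)/f)`. -/
noncomputable def qbetaChi (q : ℝ) (h : ℂ) (f : ℕ) (χ : DirichletCharacter ℂ f)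
    (n : ℕ) (x : ℝ) : ℂ :=
  qnum q (f : ℂ) ^ ((n : ℤ) - 1) * ∑ a ∈ Finset.range f,
    χ (a : ZMod f) * qcpow q ((h - 1) * (a : ℂ)) * qbeta (q ^ f) h n ((x + a) / f)

lemma qcpow_add (q : ℝ) (z w : ℂ) : qcpow q (z + w) = qcpow q z * qcpow q w := by
  simp [qcpow, add_mul, Complex.exp_add]


lemma qcpow_natCast_mul (q : ℝ) (m : ℕ) (z : ℂ) :
    qcpow q ((m : ℂ) * z) = qcpow q z ^ m := by
  rw [qcpow, qcpow, mul_assoc, Complex.exp_nat_mul]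


lemma norm_qcpow (q : ℝ) (hq0 : 0 < q) (z : ℂ) : ‖qcpow q z‖ = q ^ z.re := by
  rw [qcpow, Complex.norm_exp, Real.rpow_def_of_pos hq0]
  congr 1
  simp [mul_comm]


lemma qcpow_ofReal (q : ℝ) (y : ℝ) :
    qcpow q (y : ℂ) = ((Real.exp (y * Real.log q) : ℝ) : ℂ) := by
  rw [qcpow, ← Complex.ofReal_mul, Complex.ofReal_exp]


lemma one_sub_qcpow (q : ℝ) (y : ℝ) :
    (1 : ℂ) - qcpow q (y : ℂ) = ((1 - q : ℝ) : ℂ) * (qnumR q y : ℂ) := by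
  by_cases hq : (1 - q : ℝ) = 0
  · rw [qcpow_ofReal]
    have : Real.log q = 0 := by
      have : q = 1 := by linarith [sub_eq_zero.mp hq]
      simp [this]
    simp [this, hq]
  · rw [qcpow_ofReal, qnumR, ← Complex.ofReal_mul]
    rw [mul_div_cancel₀ _ hq]
    push_cast
    ring


lemma binom1 (t : ℂ) (n : ℕ) :
    ∑ l ∈ range (n + 1), (n.choose l : ℂ) * (-1) ^ l * t ^ l = (1 - t) ^ n := by
  have := add_pow (-t) 1 n
  simp only [one_pow, mul_one] at this
  rw [show (1 : ℂ) - t = -t + 1 by ring, this]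
  refine Finset.sum_congr rfl fun l hl => ?_
  rw [neg_pow]
  ring


lemma binom2aux (t : ℂ) (k : ℕ) :
    ∑ l ∈ range (k + 2), ((k+1).choose l : ℂ) * (-1) ^ l * (l : ℂ) * t ^ l
      = -(k + 1 : ℂ) * t * (1 - t) ^ k := by
  rw [Finset.sum_range_succ']
  simp only [Nat.cast_zero, mul_zero, zero_mul, pow_zero, mul_one, add_zero]
  have key : ∀ i : ℕ, ((k+1).choose (i+1) : ℂ) * ((i:ℂ)+1) = (k+1 : ℂ) * (k.choose i : ℂ) := by
    intro i
    have h := (Nat.add_one_mul_choose_eq k i).symm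
    have h2 := congrArg (fun j : ℕ => (j : ℂ)) h
    push_cast at h2
    linear_combination h2
  rw [← binom1 t k, Finset.mul_sum]
  refine Finset.sum_congr rfl fun i hi => ?_
  have h2 := key i
  calc ((k+1).choose (i+1) : ℂ) * (-1) ^ (i+1) * ((i+1 : ℕ) : ℂ) * t ^ (i+1)
      = (((k+1).choose (i+1) : ℂ) * ((i:ℂ)+1)) * ((-1) ^ (i+1) * t ^ (i+1)) := by
        push_cast; ring
    _ = ((k+1 : ℂ) * (k.choose i : ℂ)) * ((-1) ^ (i+1) * t ^ (i+1)) := by rw [h2]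
    _ = -(k + 1 : ℂ) * t * ((k.choose i : ℂ) * (-1) ^ i * t ^ i) := by
        rw [pow_succ, pow_succ]; ring


lemma binom2 (t : ℂ) (n : ℕ) (hn : 1 ≤ n) :
    ∑ l ∈ range (n + 1), (n.choose l : ℂ) * (-1) ^ l * (l : ℂ) * t ^ l
      = -(n : ℂ) * t * (1 - t) ^ (n - 1) := by
  obtain ⟨k, rfl⟩ : ∃ k, n = k + 1 := ⟨n - 1, by omega⟩
  simpa using binom2aux t k


lemma qnumR_nonneg (q : ℝ) (hq0 : 0 < q) (hq1 : q < 1) (y : ℝ) (hy : 0 ≤ y) :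
    0 ≤ qnumR q y := by
  have hlog : Real.log q < 0 := Real.log_neg hq0 hq1
  have h1 : Real.exp (y * Real.log q) ≤ 1 := by
    rw [Real.exp_le_one_iff]
    exact mul_nonpos_of_nonneg_of_nonpos hy hlog.le
  exact div_nonneg (by linarith) (by linarith)


lemma qnumR_le (q : ℝ) (hq0 : 0 < q) (hq1 : q < 1) (y : ℝ) (hy : 0 ≤ y) :
    qnumR q y ≤ (1 - q)⁻¹ := by
  have h0 : 0 < Real.exp (y * Real.log q) := Real.exp_pos _
  rw [qnumR, div_le_iff₀ (by linarith), inv_mul_cancel₀ (by linarith : (1:ℝ) - q ≠ 0)]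
  linarith


lemma abs_qnumR_le (q : ℝ) (hq0 : 0 < q) (hq1 : q < 1) (y : ℝ) (hy : 0 ≤ y) :
    |qnumR q y| ≤ (1 - q)⁻¹ := by
  rw [_root_.abs_of_nonneg (qnumR_nonneg q hq0 hq1 y hy)]
  exact qnumR_le q hq0 hq1 y hy


lemma qbeta_tsum (q : ℝ) (hq0 : 0 < q) (hq1 : q < 1) (h : ℂ) (hh : 1 < h.re)
    (n : ℕ) (hn : 1 ≤ n) (x : ℝ) (hx : 0 ≤ x) :
    Summable (fun m : ℕ => qcpow q ((h-1) * m) * ((qnumR q (x + m) : ℂ)) ^ n) ∧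
    Summable (fun m : ℕ => qcpow q ((h-1) * m) * qcpow q ((x : ℂ) + m) *
      ((qnumR q (x + m) : ℂ)) ^ (n-1)) ∧
    qbeta q h n x =
      (h-1) * (1 - (q:ℂ)) * ∑' m : ℕ, qcpow q ((h-1) * m) * ((qnumR q (x + m) : ℂ)) ^ n
      - (n : ℂ) * ∑' m : ℕ, qcpow q ((h-1) * m) * qcpow q ((x:ℂ) + m) *
          ((qnumR q (x + m) : ℂ)) ^ (n-1) := by
  have hlog : Real.log q < 0 := Real.log_neg hq0 hq1
  have hq1' : (1 : ℂ) - (q : ℂ) ≠ 0 := by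
    rw [sub_ne_zero]
    exact fun e => by exact_mod_cast absurd e.symm (by exact_mod_cast hq1.ne)
  -- geometric ratio
  set r : ℝ := q ^ (h.re - 1) with hr
  have hr0 : 0 ≤ r := Real.rpow_nonneg hq0.le _
  have hr1 : r < 1 := Real.rpow_lt_one hq0.le hq1 (by linarith)
  have hnormE : ∀ m : ℕ, ‖qcpow q ((h-1) * m)‖ = r ^ m := by
    intro m
    rw [norm_qcpow q hq0]
    have : ((h-1) * (m:ℂ)).re = (h.re - 1) * (m : ℝ) := by
      simp [Complex.mul_re]
    rw [this, Real.rpow_mul hq0.le, hr, ← Real.rpow_natCast (q ^ (h.re-1)) m]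
  have hnormQ : ∀ m : ℕ, ‖((qnumR q (x + m) : ℂ))‖ ≤ (1 - q)⁻¹ := by
    intro m
    rw [Complex.norm_real]
    exact abs_qnumR_le q hq0 hq1 _ (by positivity)
  have hnormT : ∀ m : ℕ, ‖qcpow q ((x:ℂ) + m)‖ ≤ 1 := by
    intro m
    rw [norm_qcpow q hq0]
    apply Real.rpow_le_one hq0.le hq1.le
    simp
    positivity
  have hgeom : Summable (fun m : ℕ => r ^ m) := summable_geometric_of_lt_one hr0 hr1
  have hS1 : Summable (fun m : ℕ => qcpow q ((h-1) * m) * ((qnumR q (x + m) : ℂ)) ^ n) := by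
    apply Summable.of_norm_bounded (g := fun m => ((1-q)⁻¹) ^ n * r ^ m) (hgeom.mul_left _)
    intro m
    rw [norm_mul, norm_pow, hnormE]
    rw [mul_comm (((1-q)⁻¹)^n)]
    apply mul_le_mul_of_nonneg_left _ (pow_nonneg hr0 m)
    exact pow_le_pow_left₀ (norm_nonneg _) (hnormQ m) n
  have hS2 : Summable (fun m : ℕ => qcpow q ((h-1) * m) * qcpow q ((x:ℂ) + m) *
      ((qnumR q (x + m) : ℂ)) ^ (n-1)) := by
    apply Summable.of_norm_bounded (g := fun m => ((1-q)⁻¹) ^ (n-1) * r ^ m) (hgeom.mul_left _)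
    intro m
    rw [norm_mul, norm_mul, norm_pow, hnormE]
    calc r ^ m * ‖qcpow q ((x:ℂ) + m)‖ * ‖((qnumR q (x + m) : ℂ))‖ ^ (n-1)
        ≤ r ^ m * 1 * ((1-q)⁻¹) ^ (n-1) := by
          apply mul_le_mul
          · exact mul_le_mul_of_nonneg_left (hnormT m) (pow_nonneg hr0 m)
          · exact pow_le_pow_left₀ (norm_nonneg _) (hnormQ m) _
          · positivity
          · positivity
      _ = ((1-q)⁻¹) ^ (n-1) * r ^ m := by ring
  refine ⟨hS1, hS2, ?_⟩
  -- geometric expansion per l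
  have hwnorm : ∀ l : ℕ, ‖qcpow q ((l:ℂ) + h - 1)‖ < 1 := by
    intro l
    rw [norm_qcpow q hq0]
    apply Real.rpow_lt_one hq0.le hq1
    have hre : ((l:ℂ) + h - 1).re = (l : ℝ) + h.re - 1 := by simp
    rw [hre]
    have : (0:ℝ) ≤ (l:ℝ) := Nat.cast_nonneg l
    linarith
  have hw1 : ∀ l : ℕ, (1:ℂ) - qcpow q ((l:ℂ) + h - 1) ≠ 0 := by
    intro l
    rw [sub_ne_zero]
    intro e
    have := hwnorm l
    rw [← e] at this
    simp at this
  have step1 : ∀ l : ℕ,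
      ((l:ℂ) + h - 1) / qnum q ((l:ℂ) + h - 1)
        = ∑' m : ℕ, (1 - (q:ℂ)) * ((l:ℂ) + h - 1) * (qcpow q ((l:ℂ) + h - 1)) ^ m := by
    intro l
    rw [tsum_mul_left, tsum_geometric_of_norm_lt_one (hwnorm l), qnum]
    field_simp
  have hSl : ∀ l ∈ range (n+1), Summable (fun m : ℕ =>
      (n.choose l:ℂ) * (-1)^l * qcpow q ((l:ℂ)*(x:ℂ)) *
        ((1 - (q:ℂ)) * ((l:ℂ)+h-1) * (qcpow q ((l:ℂ)+h-1))^m)) := by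
    intro l _
    exact (((summable_geometric_of_norm_lt_one (hwnorm l)).mul_left
      ((1 - (q:ℂ)) * ((l:ℂ)+h-1))).mul_left _)
  have qbeta_sum : qbeta q h n x = (1 - (q:ℂ))⁻¹ ^ n *
      ∑' m : ℕ, ∑ l ∈ range (n+1),
        (n.choose l : ℂ) * (-1)^l * qcpow q ((l:ℂ)*(x:ℂ)) *
          ((1 - (q:ℂ)) * ((l:ℂ)+h-1) * (qcpow q ((l:ℂ)+h-1)) ^ m) := by
    rw [qbeta, Summable.tsum_finsetSum hSl]
    congr 1
    refine Finset.sum_congr rfl fun l _ => ?_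
    rw [step1 l]
    exact tsum_mul_left.symm
  obtain ⟨k, rfl⟩ : ∃ k, n = k + 1 := ⟨n - 1, by omega⟩
  simp only [Nat.add_sub_cancel] at hS1 hS2 ⊢
  have key : ∀ m : ℕ, (∑ l ∈ range (k+1+1),
      (k+1).choose l * (-1:ℂ)^l * qcpow q ((l:ℂ)*(x:ℂ)) *
        ((1 - (q:ℂ)) * ((l:ℂ)+h-1) * (qcpow q ((l:ℂ)+h-1)) ^ m))
      = (1 - (q:ℂ))^(k+1) * ((h-1) * (1 - (q:ℂ)) *
          (qcpow q ((h-1)*m) * ((qnumR q (x + m) : ℂ)) ^ (k+1))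
        - ((k+1:ℕ) : ℂ) * (qcpow q ((h-1)*m) * qcpow q ((x:ℂ)+m) *
          ((qnumR q (x + m) : ℂ)) ^ k)) := by
    intro m
    have hexp : ∀ l : ℕ, qcpow q ((l:ℂ)*(x:ℂ)) * (qcpow q ((l:ℂ)+h-1))^m
        = (qcpow q ((x:ℂ)+(m:ℂ)))^l * qcpow q ((h-1)*(m:ℂ)) := by
      intro l
      rw [← qcpow_natCast_mul q m, ← qcpow_natCast_mul q l, ← qcpow_add, ← qcpow_add]
      congr 1
      ring
    have hterm : ∀ l ∈ range (k+1+1),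
        (k+1).choose l * (-1:ℂ)^l * qcpow q ((l:ℂ)*(x:ℂ)) *
          ((1 - (q:ℂ)) * ((l:ℂ)+h-1) * (qcpow q ((l:ℂ)+h-1)) ^ m)
        = (1 - (q:ℂ)) * qcpow q ((h-1)*(m:ℂ)) *
            (((k+1).choose l * (-1:ℂ)^l * (l:ℂ) * (qcpow q ((x:ℂ)+(m:ℂ)))^l)
            + (h-1) * ((k+1).choose l * (-1:ℂ)^l * (qcpow q ((x:ℂ)+(m:ℂ)))^l)) := by
      intro l _
      have := hexp l
      calc (k+1).choose l * (-1:ℂ)^l * qcpow q ((l:ℂ)*(x:ℂ)) *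
          ((1 - (q:ℂ)) * ((l:ℂ)+h-1) * (qcpow q ((l:ℂ)+h-1)) ^ m)
          = (k+1).choose l * (-1:ℂ)^l * (1 - (q:ℂ)) * ((l:ℂ)+h-1) *
              (qcpow q ((l:ℂ)*(x:ℂ)) * (qcpow q ((l:ℂ)+h-1)) ^ m) := by ring
        _ = (k+1).choose l * (-1:ℂ)^l * (1 - (q:ℂ)) * ((l:ℂ)+h-1) *
              ((qcpow q ((x:ℂ)+(m:ℂ)))^l * qcpow q ((h-1)*(m:ℂ))) := by rw [this]
        _ = _ := by ring
    rw [Finset.sum_congr rfl hterm, ← Finset.mul_sum, Finset.sum_add_distrib, ← Finset.mul_sum]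
    rw [binom2 _ (k+1) (by omega), binom1]
    simp only [Nat.add_sub_cancel]
    have hcast : ((x:ℂ) + (m:ℂ)) = (((x + (m:ℝ)) : ℝ) : ℂ) := by push_cast; ring
    have h1t : (1:ℂ) - qcpow q ((x:ℂ)+(m:ℂ)) = (1 - (q:ℂ)) * ((qnumR q (x + m) : ℂ)) := by
      rw [hcast, one_sub_qcpow]
      push_cast
      ring
    have ht' : qcpow q ((x:ℂ)+(m:ℂ)) = 1 - (1 - (q:ℂ)) * ((qnumR q (x + m) : ℂ)) := by
      rw [← h1t]; ring
    rw [ht', show ((1:ℂ) - (1 - (1 - (q:ℂ)) * ((qnumR q (x + m) : ℂ)))) =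
      (1 - (q:ℂ)) * ((qnumR q (x + m) : ℂ)) by ring]
    simp only [mul_pow]
    push_cast
    ring
  rw [qbeta_sum, tsum_congr key, tsum_mul_left,
    Summable.tsum_sub (hS1.mul_left ((h-1) * (1 - (q:ℂ)))) (hS2.mul_left (((k+1:ℕ)) : ℂ)),
    tsum_mul_left, tsum_mul_left, ← mul_assoc, ← mul_pow,
    inv_mul_cancel₀ hq1', one_pow, one_mul]


open Finset in

lemma sum_zmod_val {M : Type*} [AddCommMonoid M] (f : ℕ) [NeZero f] (H : ℕ → M) :
    ∑ j : ZMod f, H (ZMod.val j) = ∑ a ∈ Finset.range f, H a := by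
  rw [Finset.sum_bij' (i := fun (j : ZMod f) (_ : j ∈ univ) => ZMod.val j)
    (j := fun (a : ℕ) (_ : a ∈ range f) => (a : ZMod f)) ?_ ?_ ?_ ?_ ?_]
  · intro a ha; exact Finset.mem_range.mpr (ZMod.val_lt a)
  · intro a ha; exact Finset.mem_univ _
  · intro a ha; exact ZMod.natCast_zmod_val a
  · intro a ha; exact ZMod.val_cast_of_lt (Finset.mem_range.mp ha)
  · intro a ha; rfl


lemma qcpow_pow_base (q : ℝ) (f : ℕ) (z : ℂ) : qcpow (q ^ f) z = qcpow q ((f:ℂ) * z) := by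
  rw [qcpow, qcpow, Real.log_pow]
  congr 1
  push_cast
  ring


lemma qnumR_pow_base (q : ℝ) (hq0 : 0 < q) (hq1 : q < 1) (f : ℕ) (hf : f ≠ 0) (y : ℝ) :
    qnumR (q ^ f) y = qnumR q ((f:ℝ) * y) / qnumR q (f:ℝ) := by
  have h1 : (1:ℝ) - q ≠ 0 := sub_ne_zero.mpr (ne_of_gt (by linarith))
  have hqf1 : q ^ f < 1 := pow_lt_one₀ hq0.le hq1 hf
  have h2 : (1:ℝ) - q ^ f ≠ 0 := sub_ne_zero.mpr (ne_of_gt (by linarith))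
  have hexpf : Real.exp ((f:ℝ) * Real.log q) = q ^ f := by
    rw [Real.exp_nat_mul, Real.exp_log hq0]
  have hF : qnumR q (f:ℝ) = (1 - q ^ f) / (1 - q) := by rw [qnumR, hexpf]
  rw [qnumR, qnumR, hF, Real.log_pow,
    show y * ((f:ℝ) * Real.log q) = (f:ℝ) * y * Real.log q by ring]
  field_simp


lemma qnum_natCast (q : ℝ) (f : ℕ) : qnum q (f:ℂ) = ((qnumR q (f:ℝ) : ℝ) : ℂ) := by
  rw [qnum, qnumR, show ((f:ℕ):ℂ) = (((f:ℝ)):ℂ) by push_cast; rfl, qcpow_ofReal]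
  push_cast
  ring


/-- series representation of the generalized `(h,q)`-Bernoulli number
`β_{n,χ,q}^h = β_{n,χ,q}^h(0)` for `n ≥ 1` (with the convention `[0]_q^0 = 1`). -/
theorem qbetaChi_number_eq_tsum (q : ℝ) (hq0 : 0 < q) (hq1 : q < 1)
    (h : ℂ) (hh : 1 < h.re) (f : ℕ) (hf : 1 ≤ f) (χ : DirichletCharacter ℂ f)
    (n : ℕ) (hn : 1 ≤ n) :
    Summable (fun m : ℕ => qcpow q ((h - 1) * (m : ℂ)) * χ (m : ZMod f) *
      ((qnumR q (m : ℝ) : ℂ) ^ n)) ∧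
    Summable (fun m : ℕ => qcpow q (h * (m : ℂ)) * χ (m : ZMod f) *
      ((qnumR q (m : ℝ) : ℂ) ^ (n - 1))) ∧
    qbetaChi q h f χ n 0 =
      (h - 1) * (1 - (q : ℂ)) *
        (∑' m : ℕ, qcpow q ((h - 1) * (m : ℂ)) * χ (m : ZMod f) * ((qnumR q (m : ℝ) : ℂ) ^ n)) -
      (n : ℂ) *
        ∑' m : ℕ, qcpow q (h * (m : ℂ)) * χ (m : ZMod f) * ((qnumR q (m : ℝ) : ℂ) ^ (n - 1)) := by
  have hf0 : f ≠ 0 := by omega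
  haveI : NeZero f := ⟨hf0⟩
  have h1q : (1:ℝ) - q ≠ 0 := sub_ne_zero.mpr (ne_of_gt (by linarith))
  have hq1' : (1 : ℂ) - (q : ℂ) ≠ 0 := by
    rw [sub_ne_zero]
    exact fun e => by exact_mod_cast absurd e.symm (by exact_mod_cast hq1.ne)
  have hqf0 : 0 < q ^ f := pow_pos hq0 f
  have hqf1 : q ^ f < 1 := pow_lt_one₀ hq0.le hq1 hf0
  have hFval : qnumR q (f:ℝ) = (1 - q ^ f) / (1 - q) := by
    rw [qnumR, Real.exp_nat_mul, Real.exp_log hq0]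
  have hF0 : qnumR q (f:ℝ) ≠ 0 := by
    rw [hFval]
    apply ne_of_gt
    apply div_pos <;> linarith
  have hFC : ((qnumR q (f:ℝ) : ℝ) : ℂ) ≠ 0 := by exact_mod_cast hF0
  -- summability of the two main series
  have hr0 : (0:ℝ) ≤ q ^ (h.re - 1) := Real.rpow_nonneg hq0.le _
  have hr1 : q ^ (h.re - 1) < 1 := Real.rpow_lt_one hq0.le hq1 (by linarith)
  have hr0' : (0:ℝ) ≤ q ^ h.re := Real.rpow_nonneg hq0.le _
  have hr1' : q ^ h.re < 1 := Real.rpow_lt_one hq0.le hq1 (by linarith)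
  have hnormE : ∀ m : ℕ, ‖qcpow q ((h-1) * m)‖ = (q ^ (h.re - 1)) ^ m := by
    intro m
    rw [norm_qcpow q hq0]
    have : ((h-1) * (m:ℂ)).re = (h.re - 1) * (m : ℝ) := by simp [Complex.mul_re]
    rw [this, Real.rpow_mul hq0.le, ← Real.rpow_natCast (q ^ (h.re-1)) m]
  have hnormE' : ∀ m : ℕ, ‖qcpow q (h * m)‖ = (q ^ h.re) ^ m := by
    intro m
    rw [norm_qcpow q hq0]
    have : (h * (m:ℂ)).re = h.re * (m : ℝ) := by simp [Complex.mul_re]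
    rw [this, Real.rpow_mul hq0.le, ← Real.rpow_natCast (q ^ h.re) m]
  have hnormQ : ∀ m : ℕ, ‖((qnumR q (m:ℝ) : ℂ))‖ ≤ (1 - q)⁻¹ := by
    intro m
    rw [Complex.norm_real]
    exact abs_qnumR_le q hq0 hq1 _ (Nat.cast_nonneg m)
  have hG1 : Summable (fun m : ℕ => qcpow q ((h - 1) * (m : ℂ)) * χ (m : ZMod f) *
      ((qnumR q (m : ℝ) : ℂ) ^ n)) := by
    apply Summable.of_norm_bounded (g := fun m => ((1-q)⁻¹) ^ n * (q ^ (h.re - 1)) ^ m)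
      ((summable_geometric_of_lt_one hr0 hr1).mul_left _)
    intro m
    rw [norm_mul, norm_mul, norm_pow, hnormE]
    calc (q ^ (h.re-1)) ^ m * ‖χ (m : ZMod f)‖ * ‖((qnumR q (m:ℝ) : ℂ))‖ ^ n
        ≤ (q ^ (h.re-1)) ^ m * 1 * ((1-q)⁻¹) ^ n := by
          apply mul_le_mul
          · exact mul_le_mul_of_nonneg_left (DirichletCharacter.norm_le_one χ _)
              (pow_nonneg hr0 m)
          · exact pow_le_pow_left₀ (norm_nonneg _) (hnormQ m) _
          · positivity
          · positivity
      _ = ((1-q)⁻¹) ^ n * (q ^ (h.re-1)) ^ m := by ring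
  have hG2 : Summable (fun m : ℕ => qcpow q (h * (m : ℂ)) * χ (m : ZMod f) *
      ((qnumR q (m : ℝ) : ℂ) ^ (n - 1))) := by
    apply Summable.of_norm_bounded (g := fun m => ((1-q)⁻¹) ^ (n-1) * (q ^ h.re) ^ m)
      ((summable_geometric_of_lt_one hr0' hr1').mul_left _)
    intro m
    rw [norm_mul, norm_mul, norm_pow, hnormE']
    calc (q ^ h.re) ^ m * ‖χ (m : ZMod f)‖ * ‖((qnumR q (m:ℝ) : ℂ))‖ ^ (n-1)
        ≤ (q ^ h.re) ^ m * 1 * ((1-q)⁻¹) ^ (n-1) := by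
          apply mul_le_mul
          · exact mul_le_mul_of_nonneg_left (DirichletCharacter.norm_le_one χ _)
              (pow_nonneg hr0' m)
          · exact pow_le_pow_left₀ (norm_nonneg _) (hnormQ m) _
          · positivity
          · positivity
      _ = ((1-q)⁻¹) ^ (n-1) * (q ^ h.re) ^ m := by ring
  refine ⟨hG1, hG2, ?_⟩
  obtain ⟨k, rfl⟩ : ∃ k, n = k + 1 := ⟨n - 1, by omega⟩
  simp only [Nat.add_sub_cancel] at hG1 hG2 ⊢
  -- per-residue computation
  have main_a : ∀ a ∈ Finset.range f,
      χ (a : ZMod f) * qcpow q ((h - 1) * (a : ℂ)) * qbeta (q ^ f) h (k+1) ((0 + (a:ℝ)) / f)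
      = ((qnumR q (f:ℝ) : ℝ) : ℂ)⁻¹ ^ k *
          ((h - 1) * (1 - (q : ℂ)) *
            (∑' m : ℕ, qcpow q ((h - 1) * ((a + f*m : ℕ) : ℂ)) * χ ((a + f*m : ℕ) : ZMod f) *
              ((qnumR q ((a + f*m : ℕ) : ℝ) : ℂ) ^ (k+1)))
          - ((k+1 : ℕ) : ℂ) *
            (∑' m : ℕ, qcpow q (h * ((a + f*m : ℕ) : ℂ)) * χ ((a + f*m : ℕ) : ZMod f) *
              ((qnumR q ((a + f*m : ℕ) : ℝ) : ℂ) ^ k))) := by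
    intro a _
    have hx : (0:ℝ) ≤ ((0:ℝ) + (a:ℝ)) / f := by positivity
    obtain ⟨S1, S2, hexp⟩ := qbeta_tsum (q^f) hqf0 hqf1 h hh (k+1) (by omega)
      (((0:ℝ) + (a:ℝ)) / f) hx
    simp only [Nat.add_sub_cancel] at S1 S2 hexp
    have hfr : (f:ℝ) ≠ 0 := Nat.cast_ne_zero.mpr hf0
    have hfc : (f:ℂ) ≠ 0 := Nat.cast_ne_zero.mpr hf0
    have harg : ∀ m : ℕ, (f:ℝ) * (((0:ℝ) + (a:ℝ)) / f + m) = ((a + f*m : ℕ) : ℝ) := by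
      intro m
      push_cast
      field_simp
      ring
    have hQt : ∀ m : ℕ, qnumR (q^f) (((0:ℝ) + (a:ℝ)) / f + m)
        = qnumR q ((a + f*m : ℕ) : ℝ) / qnumR q (f:ℝ) := by
      intro m
      rw [qnumR_pow_base q hq0 hq1 f hf0, harg m]
    have hE1 : ∀ m : ℕ, qcpow q ((h-1) * (a:ℂ)) * qcpow (q^f) ((h-1) * (m:ℂ))
        = qcpow q ((h-1) * ((a + f*m : ℕ) : ℂ)) := by
      intro m
      rw [qcpow_pow_base, ← qcpow_add]
      congr 1
      push_cast
      ring
    have hT : ∀ m : ℕ, qcpow (q^f) (((((0:ℝ) + (a:ℝ)) / f : ℝ) : ℂ) + (m:ℂ))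
        = qcpow q (((a + f*m : ℕ)) : ℂ) := by
      intro m
      rw [qcpow_pow_base]
      congr 1
      push_cast
      field_simp
      ring
    have hE2 : ∀ m : ℕ, qcpow q ((h-1) * (a:ℂ)) * qcpow (q^f) ((h-1) * (m:ℂ)) *
        qcpow q (((a + f*m : ℕ)) : ℂ) = qcpow q (h * ((a + f*m : ℕ) : ℂ)) := by
      intro m
      rw [qcpow_pow_base, ← qcpow_add, ← qcpow_add]
      congr 1
      push_cast
      ring
    have e1 : χ (a : ZMod f) * qcpow q ((h-1) * (a:ℂ)) *
        (∑' m : ℕ, qcpow (q^f) ((h-1) * (m:ℂ)) *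
          ((qnumR (q^f) (((0:ℝ) + (a:ℝ)) / f + m) : ℂ)) ^ (k+1))
        = ((qnumR q (f:ℝ) : ℝ) : ℂ)⁻¹ ^ (k+1) *
          ∑' m : ℕ, qcpow q ((h - 1) * ((a + f*m : ℕ) : ℂ)) * χ ((a + f*m : ℕ) : ZMod f) *
            ((qnumR q ((a + f*m : ℕ) : ℝ) : ℂ) ^ (k+1)) := by
      rw [← tsum_mul_left, ← tsum_mul_left]
      apply tsum_congr
      intro m
      rw [hQt m, ← hE1 m]
      push_cast [ZMod.natCast_self]
      ring
    have e2 : χ (a : ZMod f) * qcpow q ((h-1) * (a:ℂ)) *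
        (∑' m : ℕ, qcpow (q^f) ((h-1) * (m:ℂ)) *
          qcpow (q^f) (((((0:ℝ) + (a:ℝ)) / f : ℝ) : ℂ) + (m:ℂ)) *
          ((qnumR (q^f) (((0:ℝ) + (a:ℝ)) / f + m) : ℂ)) ^ k)
        = ((qnumR q (f:ℝ) : ℝ) : ℂ)⁻¹ ^ k *
          ∑' m : ℕ, qcpow q (h * ((a + f*m : ℕ) : ℂ)) * χ ((a + f*m : ℕ) : ZMod f) *
            ((qnumR q ((a + f*m : ℕ) : ℝ) : ℂ) ^ k) := by
      rw [← tsum_mul_left, ← tsum_mul_left]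
      apply tsum_congr
      intro m
      rw [hQt m, hT m, ← hE2 m]
      push_cast [ZMod.natCast_self]
      ring
    rw [hexp, mul_sub]
    rw [show χ (a : ZMod f) * qcpow q ((h-1) * (a:ℂ)) *
        ((h - 1) * (1 - ((q^f : ℝ) : ℂ)) * ∑' m : ℕ, qcpow (q^f) ((h-1) * (m:ℂ)) *
          ((qnumR (q^f) (((0:ℝ) + (a:ℝ)) / f + m) : ℂ)) ^ (k+1))
        = (h - 1) * (1 - ((q^f : ℝ) : ℂ)) * (χ (a : ZMod f) * qcpow q ((h-1) * (a:ℂ)) *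
          ∑' m : ℕ, qcpow (q^f) ((h-1) * (m:ℂ)) *
            ((qnumR (q^f) (((0:ℝ) + (a:ℝ)) / f + m) : ℂ)) ^ (k+1)) by ring,
      show χ (a : ZMod f) * qcpow q ((h-1) * (a:ℂ)) *
        (((k+1 : ℕ) : ℂ) * ∑' m : ℕ, qcpow (q^f) ((h-1) * (m:ℂ)) *
          qcpow (q^f) (((((0:ℝ) + (a:ℝ)) / f : ℝ) : ℂ) + (m:ℂ)) *
          ((qnumR (q^f) (((0:ℝ) + (a:ℝ)) / f + m) : ℂ)) ^ k)
        = ((k+1 : ℕ) : ℂ) * (χ (a : ZMod f) * qcpow q ((h-1) * (a:ℂ)) *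
          ∑' m : ℕ, qcpow (q^f) ((h-1) * (m:ℂ)) *
            qcpow (q^f) (((((0:ℝ) + (a:ℝ)) / f : ℝ) : ℂ) + (m:ℂ)) *
            ((qnumR (q^f) (((0:ℝ) + (a:ℝ)) / f + m) : ℂ)) ^ k) by ring,
      e1, e2]
    have hqfC : (1:ℂ) - ((q^f : ℝ) : ℂ) = (1 - (q:ℂ)) * ((qnumR q (f:ℝ) : ℝ) : ℂ) := by
      rw [hFval]
      push_cast
      field_simp
    rw [hqfC]
    have hc : ((qnumR q (f:ℝ) : ℝ) : ℂ) * ((qnumR q (f:ℝ) : ℝ) : ℂ)⁻¹ = 1 :=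
      mul_inv_cancel₀ hFC
    set U1 := ∑' m : ℕ, qcpow q ((h - 1) * ((a + f*m : ℕ) : ℂ)) * χ ((a + f*m : ℕ) : ZMod f) *
      ((qnumR q ((a + f*m : ℕ) : ℝ) : ℂ) ^ (k+1)) with hU1
    set U2 := ∑' m : ℕ, qcpow q (h * ((a + f*m : ℕ) : ℂ)) * χ ((a + f*m : ℕ) : ZMod f) *
      ((qnumR q ((a + f*m : ℕ) : ℝ) : ℂ) ^ k) with hU2
    rw [pow_succ]
    linear_combination ((h-1) * (1 - (q:ℂ)) * U1 * ((qnumR q (f:ℝ) : ℝ) : ℂ)⁻¹ ^ k) * hc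
  -- assemble
  rw [qbetaChi, qnum_natCast q f,
    show ((k+1 : ℕ) : ℤ) - 1 = ((k : ℕ) : ℤ) by push_cast; ring, zpow_natCast,
    Finset.sum_congr rfl main_a, ← Finset.mul_sum, ← mul_assoc, ← mul_pow,
    mul_inv_cancel₀ hFC, one_pow, one_mul, Finset.sum_sub_distrib,
    ← Finset.mul_sum, ← Finset.mul_sum]
  congr 1
  · congr 1
    rw [Nat.sumByResidueClasses hG1 f]
    exact (sum_zmod_val f (fun a => ∑' m : ℕ,
      qcpow q ((h - 1) * ((a + f*m : ℕ) : ℂ)) * χ ((a + f*m : ℕ) : ZMod f) *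
        ((qnumR q ((a + f*m : ℕ) : ℝ) : ℂ) ^ (k+1)))).symm
  · congr 1
    rw [Nat.sumByResidueClasses hG2 f]
    exact (sum_zmod_val f (fun a => ∑' m : ℕ,
      qcpow q (h * ((a + f*m : ℕ) : ℂ)) * χ ((a + f*m : ℕ) : ZMod f) *
        ((qnumR q ((a + f*m : ℕ) : ℝ) : ℂ) ^ k))).symm
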